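/- Let G₀ ⊂ GL(Ṽ) be the set of matrices of the block lower-triangular form specified by (k_∅, k_a, k^a, k_{ab}; B, S, D, T) with k_∅ ∈ ℝ×, B upper block-triangular with B⁰₀ ∈ ℝ×, (Bⁱⱼ) ∈ CO(n), S symmetric, k_{ii} = 0, D^a_{ii} = 0, T_{iia} = 0, and C_B the induced conjugation action on Sym²W. Then G₀ is closed under matrix multiplication and inverses, i.e. G₀ is a subgroup of GL(Ṽ). -/

import Mathlib

open Matrix

/-- The model vector space `Ṽ = ℝ ⊕ W ⊕ W^∨ ⊕ Sym²W` for `W = ℝ^{n+1}`, with the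
symmetric square realized inside the space of matrices. -/
abbrev Vtilde (n : ℕ) : Type :=
  ℝ × (Fin (n + 1) → ℝ) × (Fin (n + 1) → ℝ) × Matrix (Fin (n + 1)) (Fin (n + 1)) ℝ

/-- The set `G₀ ⊂ GL(Ṽ)` of block lower-triangular transformations specified by
the data `(k_∅, k_a, k^a, k_{ab}; B, S, D, T)`: `k_∅ ∈ ℝˣ`; `k_{ab}` symmetric
with vanishing spatial trace; `B` block-triangular with `B⁰₀ ∈ ℝˣ` and spatial
block `b·O ∈ CO(n)`, `O ∈ SO(n)`; `S` symmetric; `D ∈ Hom(W, Sym²W)` with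
`D^a_{ii} = 0`; `T ∈ Sym³W` with `T_{iia} = 0`; the diagonal blocks are
`(k_∅, B, k_∅ B⁻ᵀ, C_B/k_∅)` where `C_B` is the conjugation action of `B` on
`Sym²W`. -/
def G0Set (n : ℕ) : Set (Vtilde n → Vtilde n) :=
  {g | ∃ (k0 : ℝ) (ka ka' : Fin (n + 1) → ℝ)
        (kab B S : Matrix (Fin (n + 1)) (Fin (n + 1)) ℝ)
        (D : Fin (n + 1) → Matrix (Fin (n + 1)) (Fin (n + 1)) ℝ)
        (T : Fin (n + 1) → Fin (n + 1) → Fin (n + 1) → ℝ)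
        (b : ℝ) (O : Matrix (Fin n) (Fin n) ℝ),
      k0 ≠ 0 ∧
      kabᵀ = kab ∧ (∑ i : Fin n, kab i.succ i.succ = 0) ∧
      B 0 0 ≠ 0 ∧ (∀ i : Fin n, B i.succ 0 = 0) ∧ b ≠ 0 ∧
      O ∈ Matrix.orthogonalGroup (Fin n) ℝ ∧ O.det = 1 ∧
      (∀ i j : Fin n, B i.succ j.succ = b * O i j) ∧
      Sᵀ = S ∧
      (∀ a, (D a)ᵀ = D a) ∧ (∀ a, ∑ i : Fin n, D a i.succ i.succ = 0) ∧
      (∀ a c e, T a c e = T c a e ∧ T a c e = T a e c) ∧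
      (∀ a, ∑ i : Fin n, T i.succ i.succ a = 0) ∧
      g = fun x : Vtilde n =>
        (k0 * x.1,
         fun a => ka a * x.1 + B.mulVec x.2.1 a,
         fun a => ka' a * x.1 + (Bᵀ)⁻¹.mulVec (S.mulVec x.2.1) a +
           k0 * (Bᵀ)⁻¹.mulVec x.2.2.1 a,
         x.1 • kab +
           Matrix.of (fun p q => ∑ c, D c p q * x.2.1 c) +
           Matrix.of (fun p q => ∑ c, ∑ d, ∑ e,
             B p c * B q d * T c d e * x.2.2.1 e) +
           k0⁻¹ • (B * x.2.2.2 * Bᵀ))}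


namespace G0aux
variable {n : ℕ}

abbrev Mat (n : ℕ) := Matrix (Fin (n+1)) (Fin (n+1)) ℝ
abbrev Vec (n : ℕ) := Fin (n+1) → ℝ
abbrev Ten (n : ℕ) := Fin (n+1) → Fin (n+1) → Fin (n+1) → ℝ

/-- `Dm D v = ∑ c, v c • D c`. -/
def Dm (D : Fin (n+1) → Mat n) (v : Vec n) : Mat n := ∑ c, v c • D c

lemma Dm_apply (D : Fin (n+1) → Mat n) (v : Vec n) (p q : Fin (n+1)) :
    Dm D v p q = ∑ c, D c p q * v c := by
  simp only [Dm, Finset.sum_apply, Matrix.sum_apply, Matrix.smul_apply, smul_eq_mul]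
  exact Finset.sum_congr rfl fun c _ => mul_comm _ _

lemma Dm_eq_of (D : Fin (n+1) → Mat n) (v : Vec n) :
    Matrix.of (fun p q => ∑ c, D c p q * v c) = Dm D v := by
  ext p q; rw [Dm_apply]; rfl

def Mid (T : Ten n) (v : Vec n) : Mat n := Dm (fun e => Matrix.of fun c d => T c d e) v

lemma Mid_apply (T : Ten n) (v : Vec n) (c d : Fin (n+1)) :
    Mid T v c d = ∑ e, T c d e * v e := Dm_apply _ _ _ _

lemma Dm_add (D : Fin (n+1) → Mat n) (v w : Vec n) : Dm D (v + w) = Dm D v + Dm D w := by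
  simp [Dm, add_smul, Finset.sum_add_distrib]

lemma Dm_smul (D : Fin (n+1) → Mat n) (a : ℝ) (v : Vec n) : Dm D (a • v) = a • Dm D v := by
  simp [Dm, Finset.smul_sum, smul_smul]

lemma Dm_mulVec (D : Fin (n+1) → Mat n) (A : Mat n) (v : Vec n) :
    Dm D (A.mulVec v) = Dm (fun f => Dm D (fun c => A c f)) v := by
  unfold Dm
  simp only [Matrix.mulVec, dotProduct, Finset.sum_smul, Finset.smul_sum, smul_smul]
  rw [Finset.sum_comm]
  exact Finset.sum_congr rfl fun c _ => Finset.sum_congr rfl fun f _ => by rw [mul_comm]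

lemma Mid_add (T : Ten n) (v w : Vec n) : Mid T (v + w) = Mid T v + Mid T w := Dm_add _ _ _
lemma Mid_smul (T : Ten n) (a : ℝ) (v : Vec n) : Mid T (a • v) = a • Mid T v := Dm_smul _ _ _

lemma Tm_eq_of (B : Mat n) (T : Ten n) (v : Vec n) :
    Matrix.of (fun p q => ∑ c, ∑ d, ∑ e, B p c * B q d * T c d e * v e)
      = B * Mid T v * Bᵀ := by
  ext p q
  simp only [Matrix.mul_apply, Mid_apply, Matrix.transpose_apply, Matrix.of_apply]
  rw [Finset.sum_comm]
  refine Finset.sum_congr rfl fun c _ => ?_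
  simp only [Finset.sum_mul, Finset.mul_sum]
  refine Finset.sum_congr rfl fun d _ => Finset.sum_congr rfl fun e _ => by ring


lemma Dm_transpose (D : Fin (n+1) → Mat n) (hD : ∀ c, (D c)ᵀ = D c) (v : Vec n) :
    (Dm D v)ᵀ = Dm D v := by
  unfold Dm
  rw [Matrix.transpose_sum]
  exact Finset.sum_congr rfl fun c _ => by rw [Matrix.transpose_smul, hD]

lemma Mid_transpose (T : Ten n) (hT : ∀ c d e, T c d e = T d c e) (v : Vec n) :
    (Mid T v)ᵀ = Mid T v :=
  Dm_transpose _ (fun e => by ext c d; simp only [Matrix.transpose_apply, Matrix.of_apply]; exact hT d c e) v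

/-- spatial trace -/
def trsp (X : Mat n) : ℝ := ∑ i : Fin n, X i.succ i.succ

lemma trsp_add (X Y : Mat n) : trsp (X + Y) = trsp X + trsp Y := by
  simp [trsp, Finset.sum_add_distrib]

lemma trsp_smul (a : ℝ) (X : Mat n) : trsp (a • X) = a * trsp X := by
  simp [trsp, Finset.mul_sum]

lemma trsp_Dm (D : Fin (n+1) → Mat n) (hD : ∀ c, trsp (D c) = 0) (v : Vec n) :
    trsp (Dm D v) = 0 := by
  unfold Dm trsp
  simp only [Matrix.sum_apply, Matrix.smul_apply, smul_eq_mul]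
  rw [Finset.sum_comm]
  calc ∑ c, ∑ i : Fin n, v c * D c i.succ i.succ
      = ∑ c, v c * trsp (D c) := by
        exact Finset.sum_congr rfl fun c _ => by rw [trsp, Finset.mul_sum]
    _ = 0 := by simp [hD]

lemma trsp_Mid (T : Ten n) (hT : ∀ e, ∑ i : Fin n, T i.succ i.succ e = 0) (v : Vec n) :
    trsp (Mid T v) = 0 :=
  trsp_Dm _ (fun e => by simpa [trsp] using hT e) v

/-- structural predicate on the `B` block -/
structure IsB (B : Mat n) (b : ℝ) (O : Matrix (Fin n) (Fin n) ℝ) : Prop where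
  h00 : B 0 0 ≠ 0
  hcol : ∀ i : Fin n, B i.succ 0 = 0
  hb : b ≠ 0
  hO : O ∈ Matrix.orthogonalGroup (Fin n) ℝ
  hdet : O.det = 1
  hsp : ∀ i j : Fin n, B i.succ j.succ = b * O i j

lemma orth_row {O : Matrix (Fin n) (Fin n) ℝ} (hO : O ∈ Matrix.orthogonalGroup (Fin n) ℝ)
    (i j : Fin n) : ∑ k, O i k * O j k = if i = j then 1 else 0 := by
  rw [Matrix.mem_orthogonalGroup_iff] at hO
  have := congrFun (congrFun hO i) j
  simpa [Matrix.mul_apply, Matrix.one_apply] using this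

lemma orth_col {O : Matrix (Fin n) (Fin n) ℝ} (hO : O ∈ Matrix.orthogonalGroup (Fin n) ℝ)
    (i j : Fin n) : ∑ k, O k i * O k j = if i = j then 1 else 0 := by
  rw [Matrix.mem_orthogonalGroup_iff'] at hO
  have := congrFun (congrFun hO i) j
  simpa [Matrix.mul_apply, Matrix.one_apply] using this

lemma trsp_conj {B : Mat n} {b : ℝ} {O : Matrix (Fin n) (Fin n) ℝ} (hB : IsB B b O)
    (X : Mat n) : trsp (B * X * Bᵀ) = b ^ 2 * trsp X := by
  unfold trsp
  simp only [Matrix.mul_apply, Matrix.transpose_apply, Finset.sum_mul]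
  calc ∑ i : Fin n, ∑ d, ∑ c, B i.succ c * X c d * B i.succ d
      = ∑ i : Fin n, ∑ d : Fin n, ∑ c : Fin n,
          (b * O i c) * X c.succ d.succ * (b * O i d) := by
        refine Finset.sum_congr rfl fun i _ => ?_
        rw [Fin.sum_univ_succ]
        simp only [hB.hcol i, mul_zero, zero_mul, Finset.sum_const_zero, zero_add]
        refine Finset.sum_congr rfl fun d _ => ?_
        rw [Fin.sum_univ_succ]
        simp [hB.hcol i, hB.hsp]
    _ = ∑ d : Fin n, ∑ c : Fin n, (b^2 * X c.succ d.succ) * ∑ i, O i c * O i d := by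
        rw [Finset.sum_comm]
        refine Finset.sum_congr rfl fun d _ => ?_
        rw [Finset.sum_comm]
        refine Finset.sum_congr rfl fun c _ => ?_
        rw [Finset.mul_sum]
        exact Finset.sum_congr rfl fun i _ => by ring
    _ = b ^ 2 * ∑ i : Fin n, X i.succ i.succ := by
        simp only [orth_col hB.hO, mul_ite, mul_one, mul_zero, Finset.mul_sum]
        rw [Finset.sum_comm]
        refine Finset.sum_congr rfl fun c _ => ?_
        simp


/-- full transform of a 3-tensor by rows of `A` -/
def TmapF (A : Mat n) (T : Ten n) : Ten n :=
  fun c d e => ∑ c', ∑ d', ∑ e', A c c' * A d d' * A e e' * T c' d' e'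

lemma Mid_TmapF (A : Mat n) (T : Ten n) (v : Vec n) :
    Mid (TmapF A T) v = A * Mid T (Aᵀ.mulVec v) * Aᵀ := by
  have h2 : Mid (fun c d e => ∑ c', ∑ d', A c c' * A d d' *
      ((fun c' d' e => ∑ e', A e e' * T c' d' e') c' d' e)) v
      = A * Mid (fun c' d' e => ∑ e', A e e' * T c' d' e') v * Aᵀ := by
    rw [← Tm_eq_of A _ v]
    ext c d
    simp only [Mid_apply, Matrix.of_apply, Finset.sum_mul]
    rw [Finset.sum_comm]
    exact Finset.sum_congr rfl fun c' _ => Finset.sum_comm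
  have h3 : Mid (fun c' d' e => ∑ e', A e e' * T c' d' e') v = Mid T (Aᵀ.mulVec v) := by
    ext c d
    simp only [Mid_apply, Matrix.mulVec, dotProduct, Matrix.transpose_apply,
      Finset.sum_mul, Finset.mul_sum]
    rw [Finset.sum_comm]
    exact Finset.sum_congr rfl fun e' _ => Finset.sum_congr rfl fun e _ => by ring
  have h1 : Mid (TmapF A T) v = Mid (fun c d e => ∑ c', ∑ d', A c c' * A d d' *
      ((fun c' d' e => ∑ e', A e e' * T c' d' e') c' d' e)) v := by
    ext c d
    simp only [Mid_apply, TmapF]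
    refine Finset.sum_congr rfl fun e _ => ?_
    congr 1
    refine Finset.sum_congr rfl fun c' _ => Finset.sum_congr rfl fun d' _ => ?_
    rw [Finset.mul_sum]
    exact Finset.sum_congr rfl fun e' _ => by ring
  rw [h1, h2, h3]

lemma TmapF_sym1 {T : Ten n} (hT : ∀ a c e, T a c e = T c a e) (A : Mat n) (c d e : Fin (n+1)) :
    TmapF A T c d e = TmapF A T d c e := by
  unfold TmapF
  rw [Finset.sum_comm]
  refine Finset.sum_congr rfl fun d' _ => Finset.sum_congr rfl fun c' _ =>
    Finset.sum_congr rfl fun e' _ => ?_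
  rw [hT c' d' e']; ring

lemma TmapF_sym2 {T : Ten n} (hT : ∀ a c e, T a c e = T a e c) (A : Mat n) (c d e : Fin (n+1)) :
    TmapF A T c d e = TmapF A T c e d := by
  unfold TmapF
  refine Finset.sum_congr rfl fun c' _ => ?_
  rw [Finset.sum_comm]
  refine Finset.sum_congr rfl fun e' _ => Finset.sum_congr rfl fun d' _ => ?_
  rw [hT c' d' e']; ring

lemma Mid_single (X : Ten n) (e : Fin (n+1)) (c d : Fin (n+1)) :
    Mid X (Pi.single e 1) c d = X c d e := by
  simp [Mid_apply, Pi.single_apply]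

lemma trsp_TmapF {A : Mat n} {a : ℝ} {Q : Matrix (Fin n) (Fin n) ℝ} (hA : IsB A a Q)
    {T : Ten n} (hT : ∀ e, ∑ i : Fin n, T i.succ i.succ e = 0) (e : Fin (n+1)) :
    ∑ i : Fin n, TmapF A T i.succ i.succ e = 0 := by
  have h1 : ∑ i : Fin n, TmapF A T i.succ i.succ e
      = trsp (Mid (TmapF A T) (Pi.single e 1)) := by
    simp [trsp, Mid_single]
  rw [h1, Mid_TmapF, trsp_conj hA, trsp_Mid T hT, mul_zero]

lemma IsB.mul {B C : Mat n} {b c : ℝ} {O P : Matrix (Fin n) (Fin n) ℝ}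
    (hB : IsB B b O) (hC : IsB C c P) : IsB (B * C) (b * c) (O * P) where
  h00 := by
    have : (B * C) 0 0 = B 0 0 * C 0 0 := by
      rw [Matrix.mul_apply, Fin.sum_univ_succ]
      simp [hC.hcol]
    rw [this]
    exact mul_ne_zero hB.h00 hC.h00
  hcol := fun i => by
    rw [Matrix.mul_apply, Fin.sum_univ_succ]
    simp [hB.hcol, hC.hcol, hB.hsp]
  hb := mul_ne_zero hB.hb hC.hb
  hO := mul_mem hB.hO hC.hO
  hdet := by rw [Matrix.det_mul, hB.hdet, hC.hdet, mul_one]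
  hsp := fun i j => by
    rw [Matrix.mul_apply, Fin.sum_univ_succ]
    simp only [hB.hcol i, zero_mul, zero_add, hB.hsp, hC.hsp, Matrix.mul_apply,
      Finset.mul_sum]
    exact Finset.sum_congr rfl fun k _ => by ring


/-- explicit inverse of a structured `B` -/
noncomputable def BinvM (B : Mat n) (b : ℝ) (O : Matrix (Fin n) (Fin n) ℝ) : Mat n :=
  Matrix.of fun p q =>
    Fin.cases
      (Fin.cases ((B 0 0)⁻¹) (fun j => -((B 0 0)⁻¹ * (b⁻¹ * ∑ k, B 0 k.succ * O j k))) q)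
      (fun i => Fin.cases 0 (fun j => b⁻¹ * O j i) q) p

lemma BinvM_zero_zero (B : Mat n) (b : ℝ) (O : Matrix (Fin n) (Fin n) ℝ) :
    BinvM B b O 0 0 = (B 0 0)⁻¹ := rfl

lemma BinvM_succ_zero (B : Mat n) (b : ℝ) (O : Matrix (Fin n) (Fin n) ℝ) (i : Fin n) :
    BinvM B b O i.succ 0 = 0 := by simp [BinvM]

lemma BinvM_succ_succ (B : Mat n) (b : ℝ) (O : Matrix (Fin n) (Fin n) ℝ) (i j : Fin n) :
    BinvM B b O i.succ j.succ = b⁻¹ * O j i := by simp [BinvM]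

lemma BinvM_zero_succ (B : Mat n) (b : ℝ) (O : Matrix (Fin n) (Fin n) ℝ) (j : Fin n) :
    BinvM B b O 0 j.succ = -((B 0 0)⁻¹ * (b⁻¹ * ∑ k, B 0 k.succ * O j k)) := by simp [BinvM]

lemma IsB.mul_binv {B : Mat n} {b : ℝ} {O : Matrix (Fin n) (Fin n) ℝ} (hB : IsB B b O) :
    B * BinvM B b O = 1 := by
  ext p q
  rw [Matrix.mul_apply]
  refine Fin.cases ?_ (fun i => ?_) p <;> refine Fin.cases ?_ (fun j => ?_) q
  · rw [Fin.sum_univ_succ]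
    simp [BinvM_zero_zero, BinvM_succ_zero, hB.h00, Matrix.one_apply]
  · rw [Fin.sum_univ_succ]
    simp only [BinvM_zero_succ, BinvM_succ_succ, Matrix.one_apply,
      Fin.succ_ne_zero, Ne, not_false_iff]
    rw [Finset.mul_sum]
    have h0 : (0 : Fin (n+1)) ≠ j.succ := (Fin.succ_ne_zero j).symm
    simp only [if_neg h0]
    field_simp [hB.h00, hB.hb]
    simp
  · rw [Fin.sum_univ_succ]
    simp [BinvM_zero_zero, BinvM_succ_zero, hB.hcol, Matrix.one_apply, Fin.succ_ne_zero]
  · rw [Fin.sum_univ_succ]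
    simp only [hB.hcol i, zero_mul, zero_add, BinvM_succ_succ, hB.hsp, Matrix.one_apply]
    have : ∑ k : Fin n, b * O i k * (b⁻¹ * O j k) = ∑ k : Fin n, O i k * O j k := by
      refine Finset.sum_congr rfl fun k _ => ?_
      field_simp [hB.hb]
    rw [this, orth_row hB.hO]
    simp [Fin.succ_inj]

lemma IsB.binv {B : Mat n} {b : ℝ} {O : Matrix (Fin n) (Fin n) ℝ} (hB : IsB B b O) :
    IsB B⁻¹ b⁻¹ Oᵀ ∧ B⁻¹ = BinvM B b O ∧ B * B⁻¹ = 1 ∧ B⁻¹ * B = 1 ∧ IsUnit B.det := by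
  have h1 : B * BinvM B b O = 1 := hB.mul_binv
  have hdet : IsUnit B.det := Matrix.isUnit_det_of_right_inverse h1
  have h2 : B⁻¹ = BinvM B b O := Matrix.inv_eq_right_inv h1
  have hOmem : Oᵀ ∈ Matrix.orthogonalGroup (Fin n) ℝ := by
    have h := hB.hO
    rw [Matrix.mem_orthogonalGroup_iff] at h
    rw [Matrix.mem_orthogonalGroup_iff']
    simpa using h
  refine ⟨?_, h2, Matrix.mul_nonsing_inv B hdet, Matrix.nonsing_inv_mul B hdet, hdet⟩
  constructor
  · rw [h2, BinvM_zero_zero]; exact inv_ne_zero hB.h00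
  · intro i; rw [h2]; exact BinvM_succ_zero B b O i
  · exact inv_ne_zero hB.hb
  · exact hOmem
  · rw [Matrix.det_transpose]; exact hB.hdet
  · intro i j; rw [h2, BinvM_succ_succ]; rfl


lemma Dm_Dadd (X Y : Fin (n+1) → Mat n) (v : Vec n) :
    Dm (fun c => X c + Y c) v = Dm X v + Dm Y v := by
  simp [Dm, smul_add, Finset.sum_add_distrib]

lemma Dm_Dsmul (a : ℝ) (X : Fin (n+1) → Mat n) (v : Vec n) :
    Dm (fun c => a • X c) v = a • Dm X v := by
  simp [Dm, Finset.smul_sum, smul_smul, mul_comm]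

lemma Dm_conj (A B : Mat n) (X : Fin (n+1) → Mat n) (v : Vec n) :
    Dm (fun c => B * X c * A) v = B * Dm X v * A := by
  simp [Dm, Matrix.mul_sum, Matrix.sum_mul, Matrix.mul_smul, Matrix.smul_mul]

lemma Mid_Tadd (X Y : Ten n) (v : Vec n) :
    Mid (fun c d e => X c d e + Y c d e) v = Mid X v + Mid Y v := by
  ext c d
  simp [Mid_apply, add_mul, Finset.sum_add_distrib]

lemma Mid_Tsmul (a : ℝ) (X : Ten n) (v : Vec n) :
    Mid (fun c d e => a * X c d e) v = a • Mid X v := by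
  ext c d
  simp [Mid_apply, Finset.mul_sum, mul_assoc]

lemma Mid_Tneg (X : Ten n) (v : Vec n) :
    Mid (fun c d e => -X c d e) v = -Mid X v := by
  ext c d
  simp [Mid_apply, Finset.sum_neg_distrib]

/-- Dm with a matrix family given as columns contracted against `A`. -/
lemma Dm_cols (X : Fin (n+1) → Mat n) (A : Mat n) (v : Vec n) :
    Dm (fun f => Dm X (fun c => A c f)) v = Dm X (A.mulVec v) := (Dm_mulVec X A v).symm

lemma Mid_cols (T : Ten n) (M : Mat n) (v : Vec n) :
    Dm (fun f => Mid T (fun e => M e f)) v = Mid T (M.mulVec v) := by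
  unfold Mid
  exact (Dm_mulVec _ M v).symm

lemma conj_transpose_self (B : Mat n) {X : Mat n} (hX : Xᵀ = X) :
    (B * X * Bᵀ)ᵀ = B * X * Bᵀ := by
  rw [Matrix.transpose_mul, Matrix.transpose_mul, Matrix.transpose_transpose, hX,
    Matrix.mul_assoc]

lemma sandwich {C : Mat n} (hC : IsUnit C.det) (B : Mat n) (T : Ten n) (v : Vec n) :
    (B * C) * Mid (TmapF C⁻¹ T) v * (B * C)ᵀ = B * Mid T ((Cᵀ)⁻¹.mulVec v) * Bᵀ := by
  have h1 : C * C⁻¹ = 1 := Matrix.mul_nonsing_inv _ hC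
  have h2 : (Cᵀ)⁻¹ * Cᵀ = 1 := Matrix.nonsing_inv_mul _ (by rw [Matrix.det_transpose]; exact hC)
  rw [Mid_TmapF, Matrix.transpose_nonsing_inv, Matrix.transpose_mul]
  rw [show B * C * (C⁻¹ * Mid T ((Cᵀ)⁻¹.mulVec v) * (Cᵀ)⁻¹) * (Cᵀ * Bᵀ)
      = B * (C * C⁻¹) * Mid T ((Cᵀ)⁻¹.mulVec v) * ((Cᵀ)⁻¹ * Cᵀ) * Bᵀ by
    simp only [Matrix.mul_assoc]]
  rw [h1, h2, Matrix.mul_one, Matrix.mul_assoc B _ _, Matrix.one_mul]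

lemma unsandwich {B : Mat n} (hB : IsUnit B.det) (T : Ten n) (v : Vec n) :
    B⁻¹ * Mid (TmapF B T) v * (B⁻¹)ᵀ = Mid T (Bᵀ.mulVec v) := by
  have h1 : B⁻¹ * B = 1 := Matrix.nonsing_inv_mul _ hB
  have h2 : Bᵀ * (Bᵀ)⁻¹ = 1 :=
    Matrix.mul_nonsing_inv _ (by rw [Matrix.det_transpose]; exact hB)
  rw [Mid_TmapF, Matrix.transpose_nonsing_inv]
  rw [show B⁻¹ * (B * Mid T (Bᵀ.mulVec v) * Bᵀ) * (Bᵀ)⁻¹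
      = (B⁻¹ * B) * Mid T (Bᵀ.mulVec v) * (Bᵀ * (Bᵀ)⁻¹) by simp only [Matrix.mul_assoc]]
  rw [h1, h2, Matrix.one_mul, Matrix.mul_one]

end G0aux

namespace G0aux

lemma Dm_Dsub (X Y : Fin (n+1) → Mat n) (v : Vec n) :
    Dm (fun c => X c - Y c) v = Dm X v - Dm Y v := by
  simp [Dm, smul_sub, Finset.sum_sub_distrib]

lemma Dm_Dneg (X : Fin (n+1) → Mat n) (v : Vec n) :
    Dm (fun c => -X c) v = -Dm X v := by
  simp [Dm, smul_neg, Finset.sum_neg_distrib]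

lemma trsp_sub (X Y : Mat n) : trsp (X - Y) = trsp X - trsp Y := by
  simp [trsp, Finset.sum_sub_distrib]

lemma comp_mem {n : ℕ} {g h : Vtilde n → Vtilde n} (hg : g ∈ G0Set n) (hh : h ∈ G0Set n) :
    g ∘ h ∈ G0Set n := by
  obtain ⟨k0, ka, ka', kab, B, S, D, T, b, O, hk0, hkabs, hkabt, hB00, hBcol, hb, hO,
    hOdet, hBsp, hS, hDs, hDt, hTs, hTt, hgE⟩ := hg
  obtain ⟨l0, la, la', lab, C, S', D', T', c, P, hl0, hlabs, hlabt, hC00, hCcol, hc, hP,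
    hPdet, hCsp, hS', hD's, hD't, hT's, hT't, hhE⟩ := hh
  have hBisb : IsB B b O := ⟨hB00, hBcol, hb, hO, hOdet, hBsp⟩
  have hCisb : IsB C c P := ⟨hC00, hCcol, hc, hP, hPdet, hCsp⟩
  obtain ⟨hCinvISB, hCinvEq, hCmul, hCmul', hCdet⟩ := hCisb.binv
  have hBCisb : IsB (B * C) (b * c) (O * P) := hBisb.mul hCisb
  refine ⟨k0 * l0, l0 • ka + B.mulVec la,
    l0 • ka' + (Bᵀ)⁻¹.mulVec (S.mulVec la) + k0 • (Bᵀ)⁻¹.mulVec la',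
    l0 • kab + Dm D la + B * Mid T la' * Bᵀ + k0⁻¹ • (B * lab * Bᵀ),
    B * C,
    Cᵀ * S * C + k0 • S',
    (fun f => Dm D (fun c0 => C c0 f)
      + B * Mid T (fun e => ((Cᵀ)⁻¹ * S') e f) * Bᵀ
      + k0⁻¹ • (B * D' f * Bᵀ)),
    (fun c0 d e => l0 * TmapF C⁻¹ T c0 d e + k0⁻¹ * T' c0 d e),
    b * c, O * P, mul_ne_zero hk0 hl0, ?_, ?_, hBCisb.h00, hBCisb.hcol,
    mul_ne_zero hb hc, mul_mem hO hP,
    by rw [Matrix.det_mul, hOdet, hPdet, mul_one], hBCisb.hsp, ?_, ?_, ?_, ?_, ?_, ?_⟩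
  · -- kab'' symmetric
    simp only [Matrix.transpose_add, Matrix.transpose_smul, hkabs,
      Dm_transpose D hDs, Mid_transpose T (fun c0 d e => (hTs c0 d e).1) la',
      conj_transpose_self B (Mid_transpose T (fun c0 d e => (hTs c0 d e).1) la'),
      conj_transpose_self B hlabs]
  · -- kab'' trace
    show trsp _ = 0
    rw [trsp_add, trsp_add, trsp_add, trsp_smul, trsp_smul,
      trsp_Dm D (fun a => hDt a) la,
      trsp_conj hBisb, trsp_conj hBisb,
      trsp_Mid T hTt la', show trsp kab = 0 from hkabt, show trsp lab = 0 from hlabt]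
    ring
  · -- S'' symmetric
    rw [Matrix.transpose_add, Matrix.transpose_smul, hS']
    congr 1
    rw [Matrix.transpose_mul, Matrix.transpose_mul, Matrix.transpose_transpose, hS,
      Matrix.mul_assoc]
  · -- D'' symmetric
    intro f
    rw [Matrix.transpose_add, Matrix.transpose_add, Matrix.transpose_smul,
      Dm_transpose D hDs,
      conj_transpose_self B (Mid_transpose T (fun c0 d e => (hTs c0 d e).1) _),
      conj_transpose_self B (hD's f)]
  · -- D'' trace
    intro f
    show trsp _ = 0
    rw [trsp_add, trsp_add, trsp_smul,
      trsp_Dm D (fun a => hDt a) _,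
      trsp_conj hBisb, trsp_conj hBisb,
      trsp_Mid T hTt _]
    have : trsp (D' f) = 0 := hD't f
    rw [this]
    ring
  · -- T'' symmetric
    intro a c0 e
    constructor
    · show l0 * TmapF C⁻¹ T a c0 e + k0⁻¹ * T' a c0 e
        = l0 * TmapF C⁻¹ T c0 a e + k0⁻¹ * T' c0 a e
      rw [TmapF_sym1 (fun a c0 e => (hTs a c0 e).1) C⁻¹ a c0 e, (hT's a c0 e).1]
    · show l0 * TmapF C⁻¹ T a c0 e + k0⁻¹ * T' a c0 e
        = l0 * TmapF C⁻¹ T a e c0 + k0⁻¹ * T' a e c0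
      rw [TmapF_sym2 (fun a c0 e => (hTs a c0 e).2) C⁻¹ a c0 e, (hT's a c0 e).2]
  · -- T'' trace
    intro a
    rw [Finset.sum_add_distrib, ← Finset.mul_sum, ← Finset.mul_sum,
      trsp_TmapF hCinvISB hTt a]
    have : ∑ i : Fin n, T' i.succ i.succ a = 0 := hT't a
    rw [this]
    ring
  · -- functional equality
    have hBdet : IsUnit B.det := hBisb.binv.2.2.2.2
    have hBt : IsUnit Bᵀ.det := by rw [Matrix.det_transpose]; exact hBdet
    have hCt : IsUnit Cᵀ.det := by rw [Matrix.det_transpose]; exact hCdet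
    have hinv : ((B * C)ᵀ)⁻¹ = (Bᵀ)⁻¹ * (Cᵀ)⁻¹ := by
      rw [Matrix.transpose_mul, Matrix.mul_inv_rev]
    have c1 : ∀ X : Mat n, (Cᵀ)⁻¹ * (Cᵀ * X) = X :=
      fun X => Matrix.nonsing_inv_mul_cancel_left Cᵀ X hCt
    subst hgE
    subst hhE
    funext x
    dsimp only [Function.comp_apply]
    have e1 : (fun a => la a * x.1 + (C *ᵥ x.2.1) a) = x.1 • la + C *ᵥ x.2.1 := by
      funext a; simp [mul_comm]
    have e2 : (fun a => la' a * x.1 + (Cᵀ⁻¹ *ᵥ S' *ᵥ x.2.1) a + l0 * (Cᵀ⁻¹ *ᵥ x.2.2.1) a)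
        = x.1 • la' + Cᵀ⁻¹ *ᵥ (S' *ᵥ x.2.1) + l0 • Cᵀ⁻¹ *ᵥ x.2.2.1 := by
      funext a; simp [mul_comm]
    simp only [Prod.mk.injEq]
    refine ⟨by ring, ?_, ?_, ?_⟩
    · -- second component
      rw [e1]
      simp only [Matrix.mulVec_add, Matrix.mulVec_smul, Matrix.mulVec_mulVec]
      funext a
      simp only [Pi.add_apply, Pi.smul_apply, smul_eq_mul]
      ring
    · -- third component
      rw [e1, e2, hinv]
      simp only [Matrix.mulVec_add, Matrix.mulVec_smul, Matrix.mulVec_mulVec,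
        Matrix.add_mulVec, Matrix.smul_mulVec, Matrix.mul_assoc, c1]
      funext a
      simp only [Pi.add_apply, Pi.smul_apply, smul_eq_mul]
      ring
    · -- fourth component
      simp only [show ∀ c0, la c0 * x.1 + (C *ᵥ x.2.1) c0 = (x.1 • la + C *ᵥ x.2.1) c0
          from fun c0 => by simp [mul_comm],
        show ∀ e, la' e * x.1 + (Cᵀ⁻¹ *ᵥ S' *ᵥ x.2.1) e + l0 * (Cᵀ⁻¹ *ᵥ x.2.2.1) e
            = (x.1 • la' + Cᵀ⁻¹ *ᵥ (S' *ᵥ x.2.1) + l0 • Cᵀ⁻¹ *ᵥ x.2.2.1) e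
          from fun e => by simp [mul_comm]]
      simp only [Dm_eq_of, Tm_eq_of]
      simp only [Mid_Tadd, Mid_Tsmul, Dm_Dadd, Dm_Dsmul, Dm_conj, Dm_cols, Mid_cols,
        Dm_add, Dm_smul, Mid_add, Mid_smul, Matrix.mulVec_mulVec]
      simp only [Matrix.mul_add, Matrix.add_mul, Matrix.mul_smul, Matrix.smul_mul,
        smul_add, smul_smul]
      rw [sandwich hCdet B T]
      simp only [Matrix.transpose_mul, Matrix.mul_assoc]
      module


lemma inv_mem {n : ℕ} {g : Vtilde n → Vtilde n} (hg : g ∈ G0Set n) :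
    ∃ h ∈ G0Set n, h ∘ g = id := by
  obtain ⟨k0, ka, ka', kab, B, S, D, T, b, O, hk0, hkabs, hkabt, hB00, hBcol, hb, hO,
    hOdet, hBsp, hS, hDs, hDt, hTs, hTt, hgE⟩ := hg
  have hBisb : IsB B b O := ⟨hB00, hBcol, hb, hO, hOdet, hBsp⟩
  obtain ⟨hBinvISB, hBinvEq, hBmul, hBmul', hBdet⟩ := hBisb.binv
  have hBt : IsUnit Bᵀ.det := by rw [Matrix.det_transpose]; exact hBdet
  have htB : Bᵀ * (B⁻¹)ᵀ = 1 := by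
    rw [← Matrix.transpose_mul, hBmul', Matrix.transpose_one]
  have htB' : (B⁻¹)ᵀ * Bᵀ = 1 := by
    rw [← Matrix.transpose_mul, hBmul, Matrix.transpose_one]
  have hti : ((B⁻¹)ᵀ)⁻¹ = Bᵀ := by
    rw [Matrix.transpose_nonsing_inv, Matrix.nonsing_inv_nonsing_inv Bᵀ hBt]
  have d1 : ∀ X : Mat n, Bᵀ * ((B⁻¹)ᵀ * X) = X := fun X => by
    rw [← Matrix.mul_assoc, htB, Matrix.one_mul]
  have d2 : Bᵀ * (Bᵀ)⁻¹ = 1 := Matrix.mul_nonsing_inv _ hBt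
  have d3 : ∀ X : Mat n, Bᵀ * ((Bᵀ)⁻¹ * X) = X := fun X =>
    Matrix.mul_nonsing_inv_cancel_left _ _ hBt
  have d4 : ∀ X : Mat n, B⁻¹ * (B * X) = X := fun X =>
    Matrix.nonsing_inv_mul_cancel_left _ _ hBdet
  -- the inverse parameters
  set D2 : Fin (n+1) → Mat n := fun f =>
    Mid T (fun e => (S * B⁻¹) e f) - k0 • (B⁻¹ * Dm D (fun c0 => B⁻¹ c0 f) * (B⁻¹)ᵀ)
    with hD2def
  have hD2s : ∀ f, (D2 f)ᵀ = D2 f := fun f => by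
    rw [hD2def, Matrix.transpose_sub, Matrix.transpose_smul,
      Mid_transpose T (fun c0 d e => (hTs c0 d e).1),
      conj_transpose_self B⁻¹ (Dm_transpose D hDs _)]
  have hD2t : ∀ f, trsp (D2 f) = 0 := fun f => by
    rw [hD2def, trsp_sub, trsp_smul, trsp_Mid T hTt, trsp_conj hBinvISB,
      trsp_Dm D (fun a => hDt a)]
    ring
  set lb : Mat n :=
    -(k0⁻¹ • (Dm D2 ka - Mid T (Bᵀ.mulVec ka') + k0 • (B⁻¹ * kab * (B⁻¹)ᵀ))) with hlbdef
  have hlbs : lbᵀ = lb := by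
    rw [hlbdef, Matrix.transpose_neg, Matrix.transpose_smul, Matrix.transpose_add,
      Matrix.transpose_sub, Matrix.transpose_smul,
      Dm_transpose D2 hD2s, Mid_transpose T (fun c0 d e => (hTs c0 d e).1),
      conj_transpose_self B⁻¹ hkabs]
  have hlbt : trsp lb = 0 := by
    rw [hlbdef]
    have : trsp (Dm D2 ka - Mid T (Bᵀ.mulVec ka') + k0 • (B⁻¹ * kab * (B⁻¹)ᵀ)) = 0 := by
      rw [trsp_add, trsp_sub, trsp_smul, trsp_Dm D2 hD2t, trsp_Mid T hTt,
        trsp_conj hBinvISB, show trsp kab = 0 from hkabt]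
      ring
    rw [show (-(k0⁻¹ • (Dm D2 ka - Mid T (Bᵀ.mulVec ka') + k0 • (B⁻¹ * kab * (B⁻¹)ᵀ))))
        = (-k0⁻¹) • (Dm D2 ka - Mid T (Bᵀ.mulVec ka') + k0 • (B⁻¹ * kab * (B⁻¹)ᵀ))
        from by rw [neg_smul], trsp_smul, this]
    ring
  refine ⟨_, ⟨k0⁻¹, -(k0⁻¹ • B⁻¹.mulVec ka),
    (k0⁻¹ * k0⁻¹) • S.mulVec (B⁻¹.mulVec ka) - (k0⁻¹ * k0⁻¹) • Bᵀ.mulVec ka',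
    lb, B⁻¹, -(k0⁻¹ • ((B⁻¹)ᵀ * S * B⁻¹)), D2,
    (fun c0 d e => -TmapF B T c0 d e), b⁻¹, Oᵀ,
    inv_ne_zero hk0, hlbs, hlbt, hBinvISB.h00, hBinvISB.hcol, inv_ne_zero hb,
    hBinvISB.hO, hBinvISB.hdet, hBinvISB.hsp, ?_, hD2s, fun f => hD2t f, ?_, ?_, rfl⟩, ?_⟩
  · -- S' symmetric
    rw [Matrix.transpose_neg, Matrix.transpose_smul]
    congr 2
    rw [Matrix.transpose_mul, Matrix.transpose_mul, Matrix.transpose_transpose, hS,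
      Matrix.mul_assoc]
  · -- T2 symmetric
    intro a c0 e
    constructor
    · show -TmapF B T a c0 e = -TmapF B T c0 a e
      rw [TmapF_sym1 (fun a c0 e => (hTs a c0 e).1) B a c0 e]
    · show -TmapF B T a c0 e = -TmapF B T a e c0
      rw [TmapF_sym2 (fun a c0 e => (hTs a c0 e).2) B a c0 e]
  · -- T2 trace
    intro a
    show ∑ i : Fin n, -TmapF B T i.succ i.succ a = 0
    rw [Finset.sum_neg_distrib, trsp_TmapF hBisb hTt a, neg_zero]
  · -- h ∘ g = id
    subst hgE
    funext x
    obtain ⟨x1, x2, x3, x4⟩ := x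
    dsimp only [Function.comp_apply, id_eq]
    have e1 : (fun a => ka a * x1 + (B *ᵥ x2) a) = x1 • ka + B *ᵥ x2 := by
      funext a; simp [mul_comm]
    have e2 : (fun a => ka' a * x1 + (Bᵀ⁻¹ *ᵥ S *ᵥ x2) a + k0 * (Bᵀ⁻¹ *ᵥ x3) a)
        = x1 • ka' + Bᵀ⁻¹ *ᵥ (S *ᵥ x2) + k0 • Bᵀ⁻¹ *ᵥ x3 := by
      funext a; simp [mul_comm]
    simp only [Prod.mk.injEq]
    refine ⟨by field_simp, ?_, ?_, ?_⟩
    · -- second component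
      rw [e1]
      simp only [Matrix.mulVec_add, Matrix.mulVec_smul, Matrix.mulVec_mulVec, hBmul',
        Matrix.one_mulVec]
      funext a
      simp only [Pi.add_apply, Pi.smul_apply, Pi.neg_apply, smul_eq_mul, Matrix.neg_mulVec,
        Matrix.smul_mulVec]
      field_simp
      ring
    · -- third component
      rw [e1, e2, hti]
      simp only [Matrix.neg_mulVec, Matrix.smul_mulVec, Matrix.mulVec_add,
        Matrix.mulVec_smul, Matrix.mulVec_neg, Matrix.mulVec_mulVec, Matrix.mul_neg,
        Matrix.neg_mul, Matrix.mul_smul, Matrix.smul_mul, Matrix.mul_assoc,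
        hBmul', Matrix.mul_one, Matrix.one_mul, d1, d2, d3, Matrix.one_mulVec]
      funext a
      simp only [Pi.add_apply, Pi.sub_apply, Pi.smul_apply, Pi.neg_apply, smul_eq_mul]
      field_simp
      ring
    · -- fourth component
      simp only [show ∀ c0, ka c0 * x1 + (B *ᵥ x2) c0 = (x1 • ka + B *ᵥ x2) c0
          from fun c0 => by simp [mul_comm],
        show ∀ e, ka' e * x1 + (Bᵀ⁻¹ *ᵥ S *ᵥ x2) e + k0 * (Bᵀ⁻¹ *ᵥ x3) e
            = (x1 • ka' + Bᵀ⁻¹ *ᵥ (S *ᵥ x2) + k0 • Bᵀ⁻¹ *ᵥ x3) e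
          from fun e => by simp [mul_comm]]
      simp only [Dm_eq_of, Tm_eq_of]
      rw [Mid_Tneg]
      simp only [Matrix.mul_neg, Matrix.neg_mul]
      rw [unsandwich hBdet]
      rw [inv_inv k0, hlbdef, hD2def]
      simp only [Dm_Dsub, Dm_Dadd, Dm_Dneg, Dm_Dsmul, Dm_conj, Dm_cols, Mid_cols]
      simp only [Dm_add, Dm_smul, Mid_add, Mid_smul, Matrix.mulVec_add, Matrix.mulVec_smul,
        Matrix.mulVec_mulVec, Matrix.mul_assoc, hBmul', Matrix.mul_one, Matrix.one_mulVec,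
        d2, d3, d4, htB, Matrix.mul_add, Matrix.add_mul, Matrix.mul_smul, Matrix.smul_mul,
        Matrix.mul_neg, Matrix.neg_mul, smul_add, smul_smul, smul_neg, neg_smul,
        sub_eq_add_neg]
      match_scalars <;> field_simp <;> ring

end G0aux

/-- `G₀` is closed under composition and inverses, i.e. `G₀` is a subgroup of
`GL(Ṽ)`. -/
theorem G0_is_subgroup (n : ℕ) :
    (∀ g ∈ G0Set n, ∀ h ∈ G0Set n, (g ∘ h) ∈ G0Set n) ∧
    (∀ g ∈ G0Set n, ∃ h ∈ G0Set n, g ∘ h = id ∧ h ∘ g = id) := by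
  constructor
  · exact fun g hg h hh => G0aux.comp_mem hg hh
  · intro g hg
    obtain ⟨h, hh, hhg⟩ := G0aux.inv_mem hg
    obtain ⟨h2, hh2, hh2h⟩ := G0aux.inv_mem hh
    have hgh2 : g = h2 := by
      calc g = id ∘ g := (Function.id_comp g).symm
        _ = (h2 ∘ h) ∘ g := by rw [hh2h]
        _ = h2 ∘ (h ∘ g) := Function.comp_assoc h2 h g
        _ = h2 ∘ id := by rw [hhg]
        _ = h2 := Function.comp_id h2
    exact ⟨h, hh, by rw [hgh2]; exact hh2h, hhg⟩
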